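/- The subspaces H¹_{Γ,Δ=0} (harmonic functions with continuous trace across Γ, i.e. γ₀¹u = 0) and K¹_{Γ,Δ=0} (harmonic functions with continuous normal derivative across Γ, i.e. γ₁¹u = 0, modulo constants on G) are orthogonal with respect to the inner product (u,v) = ∫_{G∪G'} ∇u·∇v. -/
import Mathlib


open scoped RealInnerProductSpace

/-- Abstract setting: `V` is the space of harmonic pairs
`u = (uⁱ, uᵉ)` with the Dirichlet inner product `∫_{G∪G'} ∇u·∇v`; `g0i, g0e`
are the interior/exterior traces, `g1i, g1e` the interior/exterior normal
derivative traces, `pair` the duality pairing on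
`W^{-1/2}₂(Γ) × W^{1/2}₂(Γ)`, and `hGreen` is Green's formula (3).
Then the subspaces `H¹_{Γ,Δ=0} = {u : γ₀¹u = 0}` (continuous trace across `Γ`)
and `K¹_{Γ,Δ=0} = {v : γ₁¹v = 0}` (continuous normal derivative across `Γ`)
are orthogonal with respect to `(u,v) = ∫_{G∪G'} ∇u·∇v`. -/
theorem stmt_1
    {V Wp Wm : Type*} [NormedAddCommGroup V] [InnerProductSpace ℝ V]
    [NormedAddCommGroup Wp] [NormedSpace ℝ Wp]
    [NormedAddCommGroup Wm] [NormedSpace ℝ Wm]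
    (g0i g0e : V →L[ℝ] Wp) (g1i g1e : V →L[ℝ] Wm)
    (pair : Wm →L[ℝ] Wp →L[ℝ] ℝ)
    (hGreen : ∀ u v : V, ⟪u, v⟫ = pair (g1i v) (g0i u) - pair (g1e v) (g0e u))
    : ∀ u v : V, g0i u - g0e u = 0 → g1i v - g1e v = 0 → ⟪u, v⟫ = 0 := by
  intro u v h0 h1
  rw [sub_eq_zero] at h0 h1
  rw [hGreen, h0, h1, sub_self]
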